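/- Let n ≥ 2 and let c : {1,...,n} → {1,...,n} satisfy: the image of {1,...,n} under c is {2,...,n}, c maps {2,...,n} bijectively onto {2,...,n}, and qc ≤ q+1 for all q. Then there exist L ≥ 1 and loop lengths l_1,...,l_L ≥ 1 with l_1+...+l_L = n-1 such that qc = q - l_i + 1 if q = l_1+...+l_i+1 for some 1 ≤ i ≤ L, and qc = q+1 otherwise. -/

import Mathlib

/-- let n ≥ 2 and let `c` on `Fin n` (state `i+1` is index `i`) satisfy:
the image of the full state set is `{2,...,n}`, `c` maps `{2,...,n}` bijectively onto
itself, and `qc ≤ q+1` (1-based) for all `q`.  Then there exist `L ≥ 1` loop lengths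
`l_0, ..., l_{L-1} ≥ 1` summing to `n-1` such that (1-based) `qc = q - l_i + 1` if
`q = l_0 + ... + l_i + 1` for some `i < L`, and `qc = q + 1` otherwise. -/
theorem deficiency_one_loop_structure (n : ℕ) (hn : 2 ≤ n) [NeZero n]
    (c : Fin n → Fin n)
    (himg : Finset.univ.image c = Finset.univ \ {0})
    (hbij : Set.BijOn c {q : Fin n | q ≠ 0} {q : Fin n | q ≠ 0})
    (hle : ∀ q : Fin n, (c q : ℕ) ≤ (q : ℕ) + 1) :
    ∃ L : ℕ, 1 ≤ L ∧ ∃ l : ℕ → ℕ,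
      (∀ i, i < L → 1 ≤ l i) ∧ (∑ i ∈ Finset.range L, l i) = n - 1 ∧
      ∀ q : Fin n,
        (∀ i, i < L → (q : ℕ) = (∑ j ∈ Finset.range (i + 1), l j) →
          (c q : ℕ) = (q : ℕ) + 1 - l i) ∧
        ((∀ i, i < L → (q : ℕ) ≠ (∑ j ∈ Finset.range (i + 1), l j)) →
          (c q : ℕ) = (q : ℕ) + 1) := by
  classical
  have hn0 : 0 < n := by omega
  have hvne : ∀ q : Fin n, 1 ≤ (q : ℕ) → q ∈ {q : Fin n | q ≠ 0} := by
    intro q h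
    simp only [Set.mem_setOf_eq]
    intro e; subst e; simp at h
  have hcne : ∀ q : Fin n, 1 ≤ (c q : ℕ) := by
    intro q
    have hm : (c q) ∈ Finset.univ.image c := Finset.mem_image_of_mem c (Finset.mem_univ q)
    rw [himg] at hm
    simp only [Finset.mem_sdiff, Finset.mem_singleton] at hm
    have : (c q : ℕ) ≠ 0 := fun h => hm.2 (Fin.ext (by simpa using h))
    omega
  set S : Finset (Fin n) := Finset.univ.filter (fun q => (c q : ℕ) ≠ (q : ℕ) + 1) with hS
  have hmemS : ∀ q : Fin n, q ∈ S ↔ (c q : ℕ) ≠ (q : ℕ) + 1 := by intro q; simp [hS]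
  have hSle : ∀ q ∈ S, (c q : ℕ) ≤ (q : ℕ) := by
    intro q hq; have h1 := hle q; have h2 := (hmemS q).mp hq; omega
  have hlastmem : (⟨n - 1, by omega⟩ : Fin n) ∈ S := by
    rw [hmemS]; have := (c ⟨n - 1, by omega⟩).isLt; simp; omega
  -- Claim A
  have claimA : ∀ p ∈ S, ∀ r : Fin n, (p : ℕ) < (r : ℕ) → (p : ℕ) < (c r : ℕ) := by
    intro p hp r hpr
    by_contra hcon
    push_neg at hcon
    set T : Finset (Fin n) := Finset.Icc ⟨1, by omega⟩ p with hT
    have hTmem : ∀ t : Fin n, t ∈ T ↔ 1 ≤ (t : ℕ) ∧ (t : ℕ) ≤ (p : ℕ) := by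
      intro t; rw [hT, Finset.mem_Icc, Fin.le_def, Fin.le_def]
    have hTcard : T.card = (p : ℕ) := by rw [hT, Fin.card_Icc]; simp
    have hTsub : Finset.image c T ⊆ T := by
      intro v hv
      rw [Finset.mem_image] at hv
      obtain ⟨t, ht, rfl⟩ := hv
      rw [hTmem] at ht ⊢
      refine ⟨hcne t, ?_⟩
      rcases eq_or_lt_of_le ht.2 with h | h
      · have htp : t = p := Fin.ext h
        subst htp; exact hSle t hp
      · have := hle t; omega
    have hinj : Set.InjOn c ↑T := by
      apply hbij.injOn.mono
      intro t ht
      rw [Finset.mem_coe, hTmem] at ht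
      exact hvne t ht.1
    have himT : Finset.image c T = T :=
      Finset.eq_of_subset_of_card_le hTsub (by rw [Finset.card_image_of_injOn hinj])
    have hcrT : c r ∈ T := by rw [hTmem]; exact ⟨hcne r, hcon⟩
    rw [← himT, Finset.mem_image] at hcrT
    obtain ⟨t, ht, hct⟩ := hcrT
    rw [hTmem] at ht
    have htr : t = r := hbij.injOn (hvne t ht.1) (hvne r (by omega)) hct
    subst htr; omega
  -- Claim B
  have claimB : ∀ q ∈ S, 2 ≤ (c q : ℕ) →
      (⟨(c q : ℕ) - 1, by have := (c q).isLt; omega⟩ : Fin n) ∈ S := by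
    intro q hq h2
    by_contra hr
    rw [hmemS] at hr
    push_neg at hr
    simp only at hr
    have hcq : ((c ⟨(c q : ℕ) - 1, by have := (c q).isLt; omega⟩ : Fin n) : ℕ) = (c q : ℕ) := by
      rw [hr]; omega
    have hqle := hSle q hq
    have hrq : (⟨(c q : ℕ) - 1, by have := (c q).isLt; omega⟩ : Fin n) ≠ q := by
      intro h
      have := congrArg Fin.val h
      simp only at this
      omega
    exact hrq (hbij.injOn (hvne _ (by simp; omega)) (hvne q (by omega)) (Fin.ext hcq))
  -- enumeration of S
  set L := S.card with hL
  have hLpos : 1 ≤ L := Finset.card_pos.mpr ⟨_, hlastmem⟩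
  set e := S.orderIsoOfFin rfl with he
  set f : ℕ → Fin n := fun i => if h : i < L then ((e ⟨i, h⟩ : { x // x ∈ S }) : Fin n) else 0 with hf
  set E : ℕ → ℕ := fun i => ((f i : Fin n) : ℕ) with hE
  have hfmem : ∀ i, i < L → f i ∈ S := by
    intro i h; rw [hf]; simp only [dif_pos h]; exact (e ⟨i, h⟩).2
  have hEmono : ∀ i j, i < j → j < L → E i < E j := by
    intro i j hij hj
    have hi : i < L := by omega
    rw [hE, hf]
    simp only [dif_pos hi, dif_pos hj]
    have : e ⟨i, hi⟩ < e ⟨j, hj⟩ := e.strictMono (by simp [Fin.lt_def]; omega)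
    rw [← Subtype.coe_lt_coe] at this
    exact this
  have hEpos : ∀ i, i < L → 1 ≤ E i := by
    intro i hi
    have hm := hfmem i hi
    rw [hmemS] at hm
    by_contra h
    push_neg at h
    have h0 : (f i : ℕ) = 0 := by
      have hh : E i = ((f i : Fin n) : ℕ) := rfl
      omega
    have hc0 : (c (f i) : ℕ) ≤ 1 := by have := hle (f i); omega
    have := hcne (f i)
    omega
  have hsurj : ∀ q ∈ S, ∃ i, i < L ∧ E i = (q : ℕ) := by
    intro q hq
    refine ⟨(e.symm ⟨q, hq⟩ : Fin L), (e.symm ⟨q, hq⟩).isLt, ?_⟩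
    rw [hE, hf]
    simp only [dif_pos (e.symm ⟨q, hq⟩).isLt]
    congr 1
    have : e (e.symm ⟨q, hq⟩) = ⟨q, hq⟩ := e.apply_symm_apply _
    rw [dif_pos (show ((e.symm ⟨q, hq⟩ : Fin L) : ℕ) < L from (e.symm ⟨q, hq⟩).isLt)]
    rw [show (⟨((e.symm ⟨q, hq⟩ : Fin L) : ℕ), (e.symm ⟨q, hq⟩).isLt⟩ : Fin L) = e.symm ⟨q, hq⟩ by
      apply Fin.ext; rfl]
    rw [this]
  have hElast : E (L - 1) = n - 1 := by
    obtain ⟨j, hj, hje⟩ := hsurj _ hlastmem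
    simp only at hje
    have hjle : j ≤ L - 1 := by omega
    rcases eq_or_lt_of_le hjle with h | h
    · rw [← h]; exact hje
    · exfalso
      have := hEmono j (L - 1) h (by omega)
      have hlt : E (L - 1) < n := (f (L - 1)).isLt
      omega
  -- Q and lemma C
  set Q : ℕ → ℕ := fun i => if i = 0 then 0 else E (i - 1) with hQ
  have hQ0 : Q 0 = 0 := by simp [hQ]
  have hQsucc : ∀ i, Q (i + 1) = E i := by intro i; simp [hQ]
  have lemC : ∀ i, i < L → (c (f i) : ℕ) = Q i + 1 := by
    intro i hi
    have hm := hfmem i hi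
    have hcle : (c (f i) : ℕ) ≤ E i := hSle _ hm
    cases i with
    | zero =>
      rw [hQ0]
      by_contra hne
      have h2 : 2 ≤ (c (f 0) : ℕ) := by have := hcne (f 0); omega
      have hsB := claimB _ hm h2
      obtain ⟨j, hj, hje⟩ := hsurj _ hsB
      have hje' : E j = (c (f 0) : ℕ) - 1 := hje
      have h0j : E 0 ≤ E j := by
        rcases Nat.eq_zero_or_pos j with h | h
        · rw [h]
        · exact le_of_lt (hEmono 0 j h hj)
      omega
    | succ i' =>
      rw [hQsucc]
      have hip : i' < L := by omega
      have hpm := hfmem i' hip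
      have hlt : ((f i' : Fin n) : ℕ) < ((f (i' + 1) : Fin n) : ℕ) :=
        hEmono i' (i' + 1) (by omega) hi
      have hA : E i' < (c (f (i' + 1)) : ℕ) := claimA _ hpm (f (i' + 1)) hlt
      by_contra hne
      have hp1 : 1 ≤ E i' := hEpos i' hip
      have h2 : 2 ≤ (c (f (i' + 1)) : ℕ) := by omega
      have hsB := claimB _ hm h2
      obtain ⟨j, hj, hje⟩ := hsurj _ hsB
      have hje' : E j = (c (f (i' + 1)) : ℕ) - 1 := hje
      have hij : i' < j := by
        by_contra hc
        push_neg at hc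
        rcases eq_or_lt_of_le hc with h | h
        · rw [h] at hje'; omega
        · have := hEmono j i' h hip; omega
      have hle2 : E (i' + 1) ≤ E j := by
        rcases eq_or_lt_of_le (show i' + 1 ≤ j by omega) with h | h
        · rw [h]
        · exact le_of_lt (hEmono (i' + 1) j h hj)
      omega
  have hQmono : ∀ i j, i < j → j ≤ L → Q i < Q j := by
    intro i j hij hjL
    obtain ⟨m, rfl⟩ : ∃ m, j = m + 1 := ⟨j - 1, by omega⟩
    rw [hQsucc]
    rcases Nat.eq_zero_or_pos i with h | h
    · rw [h, hQ0]
      exact hEpos m (by omega)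
    · obtain ⟨k, rfl⟩ : ∃ k, i = k + 1 := ⟨i - 1, by omega⟩
      rw [hQsucc]
      exact hEmono k m (by omega) (by omega)
  have hQL : Q L = n - 1 := by
    obtain ⟨m, hm⟩ : ∃ m, L = m + 1 := ⟨L - 1, by omega⟩
    rw [hm, hQsucc, show m = L - 1 by omega]
    exact hElast
  set l : ℕ → ℕ := fun i => Q (i + 1) - Q i with hl
  have hlval : ∀ i, l i = Q (i + 1) - Q i := fun _ => rfl
  have hsum : ∀ k, k ≤ L → ∑ j ∈ Finset.range k, l j = Q k := by
    intro k
    induction k with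
    | zero => intro _; simp [hQ0]
    | succ m ih =>
      intro hm
      rw [Finset.sum_range_succ, ih (by omega), hlval m]
      have := hQmono m (m + 1) (by omega) hm
      omega
  have hmemchar : ∀ q : Fin n, q ∈ S ↔ ∃ i, i < L ∧ (q : ℕ) = Q (i + 1) := by
    intro q
    constructor
    · intro hq
      obtain ⟨i, hi, hie⟩ := hsurj q hq
      exact ⟨i, hi, by rw [hQsucc]; omega⟩
    · rintro ⟨i, hi, hie⟩
      rw [hQsucc] at hie
      have : q = f i := Fin.ext hie
      rw [this]; exact hfmem i hi
  refine ⟨L, hLpos, l, ?_, ?_, ?_⟩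
  · intro i hi
    have h1 := hQmono i (i + 1) (by omega) (by omega)
    have h2 := hlval i
    omega
  · rw [hsum L le_rfl, hQL]
  · intro q
    constructor
    · intro i hi hq
      rw [hsum (i + 1) (by omega)] at hq
      have hfv : ((f i : Fin n) : ℕ) = Q (i + 1) := by rw [hQsucc]
      have hqf : q = f i := Fin.ext (by omega)
      rw [hqf, lemC i hi]
      have h1 := hQmono i (i + 1) (by omega) (by omega)
      have h2 := hlval i
      omega
    · intro hq
      have hns : q ∉ S := by
        rw [hmemchar]
        rintro ⟨i, hi, hie⟩
        exact hq i hi (by rw [hsum (i + 1) (by omega)]; exact hie)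
      rw [hmemS] at hns
      push_neg at hns
      exact hns
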